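/- arXiv:1506.06624 — 2 statements merged into one kernel-verified Lean document; each statement's English description precedes it below -/
import Mathlib

section
/- For a Lévy process X, there exists a continuous function ψ : ℝ^n → ℂ with ψ(0) = 0 such that E[exp(i⟨u, X_t⟩)] = exp(−t·ψ(u)) for all t ≥ 0 and u ∈ ℝ^n. -/
open MeasureTheory ProbabilityTheory Complex Filter Topology
open scoped RealInnerProductSpace

noncomputable section

/-- An `ℝⁿ`-valued Lévy process: `X₀ = 0` a.s., stationary increments that are
independent of the past, and continuity in probability. -/
structure IsLevyProcess {Ω : Type*} [MeasurableSpace Ω] (P : Measure Ω) {n : ℕ}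
    (X : ℝ → Ω → EuclideanSpace ℝ (Fin n)) : Prop where
  isProb : IsProbabilityMeasure P
  meas : ∀ t : ℝ, Measurable (X t)
  init : ∀ᵐ ω ∂P, X 0 ω = 0
  indep : ∀ s t : ℝ, 0 ≤ s → 0 ≤ t →
    IndepFun (fun ω => X (t + s) ω - X t ω)
      (fun ω => (fun r : {r : ℝ // 0 ≤ r ∧ r ≤ t} => X r ω)) P
  stat : ∀ s t : ℝ, 0 ≤ s → 0 ≤ t →
    Measure.map (fun ω => X (t + s) ω - X t ω) P = Measure.map (X s) P
  contProb : ∀ t : ℝ, 0 ≤ t → ∀ ε : ℝ, 0 < ε →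
    Tendsto (fun s : ℝ => P {ω | ε ≤ ‖X s ω - X t ω‖}) (𝓝[Set.Ici 0] t) (𝓝 0)

/-- The characteristic function `φ_t(u) = E[exp(i⟨u, X_t⟩)]`. -/
def charFn {Ω : Type*} [MeasurableSpace Ω] (P : Measure Ω) {n : ℕ}
    (X : ℝ → Ω → EuclideanSpace ℝ (Fin n)) (t : ℝ) (u : EuclideanSpace ℝ (Fin n)) : ℂ :=
  ∫ ω, Complex.exp (Complex.I * (⟪u, X t ω⟫ : ℝ)) ∂P


namespace LevyAuxPf

/-- `log (w²) = 2 log w` when `w` is close to `1`. -/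
lemma log_sq_of_close {w : ℂ} (hw : ‖w - 1‖ ≤ 1/2) :
    Complex.log (w * w) = 2 * Complex.log w := by
  have hre : (1:ℝ)/2 ≤ w.re := by
    have h1 : |(w - 1).re| ≤ ‖w - 1‖ := Complex.abs_re_le_norm (w - 1)
    rw [Complex.sub_re, Complex.one_re] at h1
    rcases abs_le.1 (le_trans h1 hw) with ⟨h2, _⟩
    linarith
  have hw0 : w ≠ 0 := by
    intro h
    rw [h] at hre
    norm_num at hre
  have harg : |Complex.arg w| < Real.pi / 2 :=
    Complex.abs_arg_lt_pi_div_two_iff.2 (Or.inl (by linarith))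
  have him : (2 * Complex.log w).im = 2 * Complex.arg w := by
    simp [Complex.log_im]
  have h1 : Complex.exp (2 * Complex.log w) = w * w := by
    rw [two_mul, Complex.exp_add, Complex.exp_log hw0]
  rw [← h1]
  rcases abs_lt.1 harg with ⟨hl, hr⟩
  exact Complex.log_exp (by rw [him]; linarith) (by rw [him]; linarith [Real.pi_pos])

/-- Uniqueness of the exponent. -/
lemma exponent_unique {c₁ c₂ : ℂ}
    (h : ∀ t : ℝ, 0 ≤ t → Complex.exp ((t:ℂ) * c₁) = Complex.exp ((t:ℂ) * c₂)) : c₁ = c₂ := by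
  by_contra hne
  have hd0 : c₁ - c₂ ≠ 0 := sub_ne_zero.2 hne
  set d := c₁ - c₂ with hd
  have habs : 0 < ‖d‖ := norm_pos_iff.mpr hd0
  set t : ℝ := Real.pi / ‖d‖ with htdef
  have ht : 0 < t := div_pos Real.pi_pos habs
  have h1 : Complex.exp ((t:ℂ) * d) = 1 := by
    have := h t ht.le
    rw [hd, mul_sub, Complex.exp_sub, this, div_self (Complex.exp_ne_zero _)]
  obtain ⟨k, hk⟩ := Complex.exp_eq_one_iff.1 h1
  have habs2 : t * ‖d‖ = |(k:ℝ)| * (2 * Real.pi) := by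
    have := congrArg (‖·‖) hk
    simpa [norm_mul, Complex.norm_real, Complex.norm_intCast, Complex.norm_I, abs_of_pos ht, abs_of_pos Real.pi_pos,
      mul_assoc] using this
  rw [htdef, div_mul_cancel₀ _ (ne_of_gt habs)] at habs2
  rcases eq_or_ne k 0 with h0 | h0
  · rw [h0] at habs2
    simp at habs2
  · have : (1:ℝ) ≤ |(k:ℝ)| := by
      rw [← Int.cast_abs]
      exact_mod_cast Int.one_le_abs h0
    nlinarith [Real.pi_pos]


lemma ne_zero_of_close {w : ℂ} (hw : ‖w - 1‖ ≤ 1/2) : w ≠ 0 := by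
  intro h
  rw [h] at hw
  norm_num at hw

/-- A continuous-at-zero multiplicative semigroup is an exponential. -/
lemma exponent_formula {f : ℝ → ℂ} {δ : ℝ}
    (h0 : f 0 = 1)
    (hmul : ∀ s t : ℝ, 0 ≤ s → 0 ≤ t → f (t + s) = f t * f s)
    (hsmall : ∀ s : ℝ, 0 ≤ s → s ≤ δ → ‖f s - 1‖ ≤ 1/2)
    (hlim : Tendsto f (𝓝[Set.Ici 0] 0) (𝓝 1))
    {M : ℕ} (hM : ((2:ℝ)^M)⁻¹ ≤ δ) :
    ∀ t : ℝ, 0 ≤ t →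
      f t = Complex.exp ((t:ℂ) * ((2:ℂ)^M * Complex.log (f (((2:ℝ)^M)⁻¹)))) := by
  set a : ℕ → ℝ := fun m => ((2:ℝ)^m)⁻¹ with ha
  have ha_pos : ∀ m, 0 < a m := fun m => by positivity
  have ha_le : ∀ m, M ≤ m → a m ≤ δ := by
    intro m hm
    refine le_trans ?_ hM
    exact inv_anti₀ (by positivity) (pow_le_pow_right₀ one_le_two hm)
  have hsm : ∀ m, M ≤ m → ‖f (a m) - 1‖ ≤ 1/2 := fun m hm =>
    hsmall _ (ha_pos m).le (ha_le m hm)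
  set c : ℂ := (2:ℂ)^M * Complex.log (f (a M)) with hc
  have hsplit : ∀ k : ℕ, a k = a (k+1) + a (k+1) := by
    intro k
    rw [ha]
    simp only
    rw [pow_succ]
    field_simp
    ring
  have hstep : ∀ j : ℕ, (2:ℂ)^(M+j) * Complex.log (f (a (M+j))) = c := by
    intro j
    induction j with
    | zero => simp [hc]
    | succ i ih =>
      have hkey : f (a (M+i)) = f (a (M+i+1)) * f (a (M+i+1)) := by
        rw [hsplit (M+i), hmul _ _ (ha_pos _).le (ha_pos _).le]
      have hlog : Complex.log (f (a (M+i))) = 2 * Complex.log (f (a (M+i+1))) := by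
        rw [hkey]
        exact log_sq_of_close (hsm (M+i+1) (by omega))
      rw [← ih, hlog]
      rw [show M + (i+1) = (M+i) + 1 by omega, pow_succ]
      ring
  have hstep' : ∀ m, M ≤ m → (2:ℂ)^m * Complex.log (f (a m)) = c := by
    intro m hm
    have := hstep (m - M)
    rwa [show M + (m - M) = m by omega] at this
  have hfa : ∀ m, M ≤ m → f (a m) = Complex.exp ((a m : ℂ) * c) := by
    intro m hm
    have hne : f (a m) ≠ 0 := ne_zero_of_close (hsm m hm)
    have hcast : ((a m : ℝ) : ℂ) = ((2:ℂ)^m)⁻¹ := by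
      rw [ha]
      push_cast
      simp
    have hl : ((a m : ℝ) : ℂ) * c = Complex.log (f (a m)) := by
      rw [← hstep' m hm, hcast, inv_mul_cancel_left₀ (pow_ne_zero _ two_ne_zero)]
    rw [hl, Complex.exp_log hne]
  have hk : ∀ m, M ≤ m → ∀ k : ℕ, f (k * a m) = Complex.exp (((k * a m : ℝ) : ℂ) * c) := by
    intro m hm k
    induction k with
    | zero => simp [h0]
    | succ j ih =>
      have heq : ((j:ℝ)+1) * a m = (j : ℝ) * a m + a m := by ring
      push_cast
      rw [heq, hmul (a m) ((j:ℝ) * a m) (ha_pos m).le (by positivity), ih, hfa m hm,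
        ← Complex.exp_add]
      congr 1
      push_cast
      ring
  intro t ht
  set k : ℕ → ℕ := fun m => ⌊(2:ℝ)^m * t⌋₊ with hkdef
  set s : ℕ → ℝ := fun m => (k m : ℝ) * a m with hsdef
  set r : ℕ → ℝ := fun m => t - s m with hrdef
  have hs_le : ∀ m, s m ≤ t := by
    intro m
    have h1 : (k m : ℝ) ≤ (2:ℝ)^m * t := Nat.floor_le (by positivity)
    have : (k m : ℝ) * a m ≤ ((2:ℝ)^m * t) * a m :=
      mul_le_mul_of_nonneg_right h1 (ha_pos m).le
    calc s m = (k m : ℝ) * a m := rfl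
      _ ≤ ((2:ℝ)^m * t) * a m := this
      _ = t := by rw [ha]; field_simp
  have hr_nonneg : ∀ m, 0 ≤ r m := fun m => sub_nonneg.2 (hs_le m)
  have hr_lt : ∀ m, r m < a m := by
    intro m
    have h1 : (2:ℝ)^m * t < (k m : ℝ) + 1 := Nat.lt_floor_add_one _
    have h2 : ((2:ℝ)^m * t) * a m < ((k m : ℝ) + 1) * a m :=
      mul_lt_mul_of_pos_right h1 (ha_pos m)
    have h3 : ((2:ℝ)^m * t) * a m = t := by rw [ha]; field_simp
    rw [h3] at h2
    have : t - (k m : ℝ) * a m < a m := by linarith [h2]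
    simpa [hrdef, hsdef] using this
  have ha_lim : Tendsto a atTop (𝓝 0) := by
    rw [ha]
    have := tendsto_pow_atTop_nhds_zero_of_lt_one (by norm_num : (0:ℝ) ≤ 2⁻¹) (by norm_num)
    simpa [inv_pow] using this
  have hr_lim : Tendsto r atTop (𝓝[Set.Ici 0] 0) := by
    rw [tendsto_nhdsWithin_iff]
    constructor
    · exact squeeze_zero hr_nonneg (fun m => (hr_lt m).le) ha_lim
    · exact Eventually.of_forall fun m => hr_nonneg m
  have hs_lim : Tendsto s atTop (𝓝 t) := by
    have : Tendsto (fun m => t - r m) atTop (𝓝 (t - 0)) :=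
      tendsto_const_nhds.sub (hr_lim.mono_right nhdsWithin_le_nhds)
    simpa [hrdef] using this
  have hmain : Tendsto (fun m => Complex.exp (((s m : ℝ) : ℂ) * c) * f (r m)) atTop
      (𝓝 (Complex.exp ((t:ℂ) * c) * 1)) := by
    apply Tendsto.mul
    · apply (Complex.continuous_exp.tendsto _).comp
      apply Tendsto.mul_const
      exact (Complex.continuous_ofReal.tendsto t).comp hs_lim
    · exact hlim.comp hr_lim
  have heq : ∀ᶠ m in atTop, Complex.exp (((s m : ℝ) : ℂ) * c) * f (r m) = f t := by
    filter_upwards [eventually_ge_atTop M] with m hm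
    have h1 : f t = f (s m + r m) := by rw [hsdef]; congr 1; rw [hrdef]; ring
    rw [h1, hmul (r m) (s m) (hr_nonneg m) (by positivity), hk m hm (k m)]
  have : Tendsto (fun _ : ℕ => f t) atTop (𝓝 (Complex.exp ((t:ℂ) * c) * 1)) :=
    hmain.congr' heq
  have := tendsto_nhds_unique this tendsto_const_nhds
  rw [mul_one] at this
  exact this.symm

variable {Ω : Type*} [MeasurableSpace Ω] {P : Measure Ω} {n : ℕ}
  {X : ℝ → Ω → EuclideanSpace ℝ (Fin n)}

/-- The integrand. -/
def ker (u x : EuclideanSpace ℝ (Fin n)) : ℂ := Complex.exp (Complex.I * (⟪u, x⟫ : ℝ))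

lemma ker_cont (u : EuclideanSpace ℝ (Fin n)) : Continuous (ker u) :=
  Complex.continuous_exp.comp (continuous_const.mul
    (Complex.continuous_ofReal.comp (continuous_const.inner continuous_id)))

lemma ker_cont' (x : EuclideanSpace ℝ (Fin n)) :
    Continuous (fun u : EuclideanSpace ℝ (Fin n) => ker u x) :=
  Complex.continuous_exp.comp (continuous_const.mul
    (Complex.continuous_ofReal.comp (continuous_id.inner continuous_const)))

lemma norm_ker (u x : EuclideanSpace ℝ (Fin n)) : ‖ker u x‖ = 1 := by
  rw [ker, Complex.norm_exp]
  simp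

lemma charFn_eq (t : ℝ) (u : EuclideanSpace ℝ (Fin n)) :
    charFn P X t u = ∫ ω, ker u (X t ω) ∂P := rfl

lemma sm (u : EuclideanSpace ℝ (Fin n)) {Y : Ω → EuclideanSpace ℝ (Fin n)}
    (h : Measurable Y) : AEStronglyMeasurable (fun ω => ker u (Y ω)) P :=
  ((ker_cont u).measurable.comp h).aestronglyMeasurable

lemma integrable_ker (u : EuclideanSpace ℝ (Fin n)) {Y : Ω → EuclideanSpace ℝ (Fin n)}
    (h : Measurable Y) [IsProbabilityMeasure P] : Integrable (fun ω => ker u (Y ω)) P := by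
  apply Integrable.mono' (integrable_const 1) (sm u h)
  exact Eventually.of_forall fun ω => le_of_eq (norm_ker u _)

lemma charFn_zero (hX : IsLevyProcess P X) (u : EuclideanSpace ℝ (Fin n)) :
    charFn P X 0 u = 1 := by
  haveI := hX.isProb
  rw [charFn_eq]
  have : (fun ω => ker u (X 0 ω)) =ᵐ[P] fun _ => (1:ℂ) := by
    filter_upwards [hX.init] with ω hω
    simp [ker, hω]
  rw [integral_congr_ae this]
  simp

lemma charFn_cont (hX : IsLevyProcess P X) (t : ℝ) :
    Continuous (fun u => charFn P X t u) := by
  haveI := hX.isProb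
  simp only [charFn_eq]
  apply continuous_of_dominated (bound := fun _ => (1:ℝ))
  · exact fun u => sm u (hX.meas t)
  · exact fun u => Eventually.of_forall fun ω => le_of_eq (norm_ker u _)
  · exact integrable_const 1
  · exact Eventually.of_forall fun ω => ker_cont' (X t ω)

lemma charFn_mul (hX : IsLevyProcess P X) (u : EuclideanSpace ℝ (Fin n)) {s t : ℝ}
    (hs : 0 ≤ s) (ht : 0 ≤ t) :
    charFn P X (t + s) u = charFn P X t u * charFn P X s u := by
  haveI := hX.isProb
  set A : Ω → EuclideanSpace ℝ (Fin n) := fun ω => X (t + s) ω - X t ω with hAdef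
  have hA : Measurable A := (hX.meas _).sub (hX.meas _)
  have hB : Measurable (X t) := hX.meas t
  have h1 : IndepFun A (X t) P := by
    have h := (hX.indep s t hs ht).comp measurable_id
      (measurable_pi_apply (⟨t, ht, le_refl t⟩ : {r : ℝ // 0 ≤ r ∧ r ≤ t}))
    exact h
  have hmap : P.map (fun ω => (A ω, X t ω)) = (P.map A).prod (P.map (X t)) :=
    (indepFun_iff_map_prod_eq_prod_map_map hA.aemeasurable hB.aemeasurable).1 h1
  haveI : IsProbabilityMeasure (P.map A) := Measure.isProbabilityMeasure_map hA.aemeasurable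
  haveI : IsProbabilityMeasure (P.map (X t)) := Measure.isProbabilityMeasure_map hB.aemeasurable
  have key : charFn P X (t + s) u = ∫ ω, ker u (A ω) * ker u (X t ω) ∂P := by
    rw [charFn_eq]
    apply integral_congr_ae
    apply Eventually.of_forall
    intro ω
    have hxe : X (t + s) ω = A ω + X t ω := by
      show X (t + s) ω = (X (t + s) ω - X t ω) + X t ω
      rw [sub_add_cancel]
    show ker u (X (t + s) ω) = ker u (A ω) * ker u (X t ω)
    rw [hxe, ker, ker, ker, inner_add_right]
    push_cast
    rw [mul_add, Complex.exp_add]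
  have hmeas2 : AEStronglyMeasurable
      (fun z : EuclideanSpace ℝ (Fin n) × EuclideanSpace ℝ (Fin n) => ker u z.1 * ker u z.2)
      ((P.map A).prod (P.map (X t))) :=
    (((ker_cont u).comp continuous_fst).mul ((ker_cont u).comp continuous_snd)).aestronglyMeasurable
  have h2 : ∫ ω, ker u (A ω) * ker u (X t ω) ∂P
      = ∫ z : EuclideanSpace ℝ (Fin n) × EuclideanSpace ℝ (Fin n),
          ker u z.1 * ker u z.2 ∂((P.map A).prod (P.map (X t))) := by
    rw [← hmap, integral_map (hA.aemeasurable.prodMk hB.aemeasurable)]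
    rw [hmap]
    exact hmeas2
  rw [key, h2, integral_prod_mul, hX.stat s t hs ht,
    integral_map (hX.meas s).aemeasurable (ker_cont u).aestronglyMeasurable,
    integral_map hB.aemeasurable (ker_cont u).aestronglyMeasurable]
  rw [mul_comm]
  rfl

lemma charFn_sub_one_bound (hX : IsLevyProcess P X) (s : ℝ) (u : EuclideanSpace ℝ (Fin n))
    {ε : ℝ} (hε : 0 < ε) (h1 : ‖u‖ * ε ≤ 1) :
    ‖charFn P X s u - 1‖ ≤ 2 * (‖u‖ * ε) + 2 * (P {ω | ε ≤ ‖X s ω‖}).toReal := by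
  haveI := hX.isProb
  set A := {ω : Ω | ε ≤ ‖X s ω‖} with hA
  have hAm : MeasurableSet A := measurableSet_le measurable_const (hX.meas s).norm
  have hbound : ∀ ω, ‖ker u (X s ω) - 1‖ ≤ 2 * (‖u‖ * ε) + A.indicator (fun _ => (2:ℝ)) ω := by
    intro ω
    by_cases hω : ω ∈ A
    · rw [Set.indicator_of_mem hω]
      have h2 : ‖ker u (X s ω) - 1‖ ≤ 2 := by
        calc ‖ker u (X s ω) - 1‖ ≤ ‖ker u (X s ω)‖ + ‖(1:ℂ)‖ := norm_sub_le _ _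
          _ = 2 := by rw [norm_ker]; norm_num
      have h3 : 0 ≤ 2 * (‖u‖ * ε) := by positivity
      linarith
    · rw [Set.indicator_of_notMem hω]
      have hx : ¬ ε ≤ ‖X s ω‖ := hω
      push_neg at hx
      have hi : ‖Complex.I * ((⟪u, X s ω⟫ : ℝ) : ℂ)‖ ≤ ‖u‖ * ε := by
        rw [norm_mul, Complex.norm_I, one_mul, Complex.norm_real, Real.norm_eq_abs]
        calc |⟪u, X s ω⟫| ≤ ‖u‖ * ‖X s ω‖ := abs_real_inner_le_norm u _
          _ ≤ ‖u‖ * ε := mul_le_mul_of_nonneg_left hx.le (norm_nonneg u)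
      have h5 := Complex.norm_exp_sub_one_le (le_trans hi h1)
      rw [ker]
      linarith
  have key : charFn P X s u - 1 = ∫ ω, (ker u (X s ω) - 1) ∂P := by
    rw [integral_sub (integrable_ker u (hX.meas s)) (integrable_const 1), integral_const,
      probReal_univ, one_smul, charFn_eq]
  rw [key]
  have hint1 : Integrable (fun ω => ker u (X s ω) - 1) P :=
    (integrable_ker u (hX.meas s)).sub (integrable_const 1)
  calc ‖∫ ω, (ker u (X s ω) - 1) ∂P‖ ≤ ∫ ω, ‖ker u (X s ω) - 1‖ ∂P :=
        norm_integral_le_integral_norm _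
    _ ≤ ∫ ω, (2 * (‖u‖ * ε) + A.indicator (fun _ => (2:ℝ)) ω) ∂P := by
        apply integral_mono hint1.norm
          ((integrable_const _).add ((integrable_const (2:ℝ)).indicator hAm)) hbound
    _ = 2 * (‖u‖ * ε) + 2 * (P A).toReal := by
        rw [integral_add (integrable_const _) ((integrable_const (2:ℝ)).indicator hAm),
          integral_const, probReal_univ, one_smul,
          integral_indicator_const _ hAm]
        rw [smul_eq_mul, Measure.real]
        ring

lemma measure_norm_tendsto (hX : IsLevyProcess P X) {ε : ℝ} (hε : 0 < ε) :
    Tendsto (fun s : ℝ => P {ω | ε ≤ ‖X s ω‖}) (𝓝[Set.Ici 0] 0) (𝓝 0) := by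
  have h := hX.contProb 0 le_rfl ε hε
  refine h.congr fun s => ?_
  apply measure_congr
  rw [eventuallyEq_set]
  filter_upwards [hX.init] with ω hω
  rw [hω, sub_zero]

lemma measure_norm_small (hX : IsLevyProcess P X) {ε η : ℝ} (hε : 0 < ε) (hη : 0 < η) :
    ∀ᶠ s in 𝓝[Set.Ici 0] (0:ℝ), (P {ω | ε ≤ ‖X s ω‖}).toReal ≤ η := by
  have h := measure_norm_tendsto hX hε
  have h8 : (0:ENNReal) < ENNReal.ofReal η := by simp [hη]
  filter_upwards [Filter.Tendsto.eventually_lt_const h8 h] with s hs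
  exact ENNReal.toReal_le_of_le_ofReal hη.le hs.le

lemma charFn_tendsto_one (hX : IsLevyProcess P X) (u : EuclideanSpace ℝ (Fin n)) :
    Tendsto (fun s : ℝ => charFn P X s u) (𝓝[Set.Ici 0] 0) (𝓝 1) := by
  rw [Metric.tendsto_nhds]
  intro η hη
  have hu1 : 0 < ‖u‖ + 1 := by positivity
  set ε : ℝ := min (η / (8 * (‖u‖ + 1))) (‖u‖ + 1)⁻¹ with hεdef
  have hε : 0 < ε := lt_min (by positivity) (by positivity)
  have hεle1 : ‖u‖ * ε ≤ 1 := by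
    calc ‖u‖ * ε ≤ (‖u‖+1) * (‖u‖+1)⁻¹ :=
          mul_le_mul (by linarith) (min_le_right _ _) hε.le (by linarith)
      _ = 1 := mul_inv_cancel₀ (ne_of_gt hu1)
  have hεle2 : 2 * (‖u‖ * ε) ≤ η / 4 := by
    have hq : (‖u‖+1) * (η / (8 * (‖u‖+1))) = η/8 := by
      field_simp
    have h2 : ‖u‖ * ε ≤ (‖u‖+1) * (η / (8 * (‖u‖+1))) :=
      mul_le_mul (by linarith) (min_le_left _ _) hε.le (by linarith)
    rw [hq] at h2
    linarith
  filter_upwards [measure_norm_small hX hε (show (0:ℝ) < η/8 by linarith)] with s hs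
  rw [dist_eq_norm]
  have hb := charFn_sub_one_bound hX s u hε hεle1
  calc ‖charFn P X s u - 1‖ ≤ 2 * (‖u‖ * ε) + 2 * (P {ω | ε ≤ ‖X s ω‖}).toReal := hb
    _ ≤ η/4 + η/4 := by linarith
    _ < η := by linarith

lemma charFn_ball_bound (hX : IsLevyProcess P X) {R : ℝ} (hR : 0 < R) :
    ∃ δ : ℝ, 0 < δ ∧ ∀ u : EuclideanSpace ℝ (Fin n), ‖u‖ ≤ R →
      ∀ s : ℝ, 0 ≤ s → s ≤ δ → ‖charFn P X s u - 1‖ ≤ 1/2 := by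
  set ε : ℝ := 1 / (8 * R) with hεdef
  have hε : 0 < ε := by positivity
  have hev : ∀ᶠ s in 𝓝[Set.Ici 0] (0:ℝ), (P {ω | ε ≤ ‖X s ω‖}).toReal ≤ 1/8 :=
    measure_norm_small hX hε (by norm_num)
  rw [eventually_nhdsWithin_iff, Metric.eventually_nhds_iff] at hev
  obtain ⟨δ', hδ', hδev⟩ := hev
  refine ⟨δ'/2, by positivity, fun u hu s hs hsle => ?_⟩
  have hsd : dist s 0 < δ' := by
    rw [Real.dist_eq, sub_zero, _root_.abs_of_nonneg hs]
    linarith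
  have hP := hδev hsd hs
  have hεle1 : ‖u‖ * ε ≤ 1 := by
    have : ‖u‖ * ε ≤ R * ε := mul_le_mul_of_nonneg_right hu hε.le
    rw [hεdef] at this ⊢
    calc ‖u‖ * (1 / (8*R)) ≤ R * (1 / (8*R)) := this
      _ = 1/8 := by field_simp
      _ ≤ 1 := by norm_num
  have hb := charFn_sub_one_bound hX s u hε hεle1
  have h2 : ‖u‖ * ε ≤ 1/8 := by
    calc ‖u‖ * ε ≤ R * ε := mul_le_mul_of_nonneg_right hu hε.le
      _ = 1/8 := by rw [hεdef]; field_simp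
  linarith


end LevyAuxPf

/-- existence of the characteristic exponent:
`E[exp(i⟨u,X_t⟩)] = exp(-t ψ(u))` with `ψ` continuous and `ψ(0) = 0`. -/
theorem exists_levy_exponent {Ω : Type*} [MeasurableSpace Ω] (P : Measure Ω) {n : ℕ}
    (X : ℝ → Ω → EuclideanSpace ℝ (Fin n)) (hX : IsLevyProcess P X) :
    ∃ ψ : EuclideanSpace ℝ (Fin n) → ℂ, Continuous ψ ∧ ψ 0 = 0 ∧
      ∀ t : ℝ, 0 ≤ t → ∀ u : EuclideanSpace ℝ (Fin n),
        charFn P X t u = Complex.exp (-(t : ℂ) * ψ u) := by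
  haveI := hX.isProb
  have hex : ∀ u : EuclideanSpace ℝ (Fin n), ∃ c : ℂ, ∀ t : ℝ, 0 ≤ t →
      charFn P X t u = Complex.exp (-(t:ℂ) * c) := by
    intro u
    obtain ⟨δ, hδ, hbd⟩ := LevyAuxPf.charFn_ball_bound hX
      (show (0:ℝ) < ‖u‖ + 1 by positivity)
    obtain ⟨M, hM⟩ : ∃ M : ℕ, ((2:ℝ)^M)⁻¹ ≤ δ := by
      obtain ⟨M, hM⟩ := exists_pow_lt_of_lt_one hδ (show (2:ℝ)⁻¹ < 1 by norm_num)
      exact ⟨M, by rw [← inv_pow]; exact hM.le⟩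
    refine ⟨-((2:ℂ)^M * Complex.log (charFn P X ((2:ℝ)^M)⁻¹ u)), fun t ht => ?_⟩
    have hform : charFn P X t u = Complex.exp ((t:ℂ) *
        ((2:ℂ)^M * Complex.log (charFn P X ((2:ℝ)^M)⁻¹ u))) :=
      LevyAuxPf.exponent_formula (f := fun t => charFn P X t u)
      (LevyAuxPf.charFn_zero hX u)
      (fun s t hs ht => LevyAuxPf.charFn_mul hX u hs ht)
      (fun s hs hsδ => hbd u (by linarith [norm_nonneg u]) s hs hsδ)
      (LevyAuxPf.charFn_tendsto_one hX u) hM t ht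
    rw [hform]
    congr 1
    ring
  have huniq : ∀ (u : EuclideanSpace ℝ (Fin n)) (c₁ c₂ : ℂ),
      (∀ t : ℝ, 0 ≤ t → charFn P X t u = Complex.exp (-(t:ℂ) * c₁)) →
      (∀ t : ℝ, 0 ≤ t → charFn P X t u = Complex.exp (-(t:ℂ) * c₂)) → c₁ = c₂ := by
    intro u c₁ c₂ h1 h2
    have key := LevyAuxPf.exponent_unique (c₁ := -c₁) (c₂ := -c₂) (fun t ht => by
      have e1 := h1 t ht
      have e2 := h2 t ht
      rw [show (t:ℂ) * -c₁ = -(t:ℂ) * c₁ by ring, show (t:ℂ) * -c₂ = -(t:ℂ) * c₂ by ring,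
        ← e1, ← e2])
    exact neg_injective key
  choose ψ hψ using hex
  refine ⟨ψ, ?_, ?_, fun t ht u => hψ u t ht⟩
  · rw [continuous_iff_continuousAt]
    intro u₀
    obtain ⟨δ, hδ, hbd⟩ := LevyAuxPf.charFn_ball_bound hX
      (show (0:ℝ) < ‖u₀‖ + 1 by positivity)
    obtain ⟨M, hM⟩ : ∃ M : ℕ, ((2:ℝ)^M)⁻¹ ≤ δ := by
      obtain ⟨M, hM⟩ := exists_pow_lt_of_lt_one hδ (show (2:ℝ)⁻¹ < 1 by norm_num)
      exact ⟨M, by rw [← inv_pow]; exact hM.le⟩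
    have haMpos : (0:ℝ) ≤ ((2:ℝ)^M)⁻¹ := by positivity
    set g0 : EuclideanSpace ℝ (Fin n) → ℂ :=
      fun u => -((2:ℂ)^M * Complex.log (charFn P X ((2:ℝ)^M)⁻¹ u)) with hg0
    have hS : IsOpen {u : EuclideanSpace ℝ (Fin n) | ‖u‖ < ‖u₀‖ + 1} :=
      isOpen_lt continuous_norm continuous_const
    have hmem : u₀ ∈ {u : EuclideanSpace ℝ (Fin n) | ‖u‖ < ‖u₀‖ + 1} := by
      simp only [Set.mem_setOf_eq]
      linarith
    have heq : Set.EqOn ψ g0 {u : EuclideanSpace ℝ (Fin n) | ‖u‖ < ‖u₀‖ + 1} := by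
      intro u hu
      refine huniq u (ψ u) (g0 u) (hψ u) fun t ht => ?_
      have hform : charFn P X t u = Complex.exp ((t:ℂ) *
          ((2:ℂ)^M * Complex.log (charFn P X ((2:ℝ)^M)⁻¹ u))) :=
        LevyAuxPf.exponent_formula (f := fun t => charFn P X t u)
        (LevyAuxPf.charFn_zero hX u)
        (fun s t hs ht => LevyAuxPf.charFn_mul hX u hs ht)
        (fun s hs hsδ => hbd u (le_of_lt hu) s hs hsδ)
        (LevyAuxPf.charFn_tendsto_one hX u) hM t ht
      rw [hform, hg0]
      congr 1
      ring
    have hg0cont : ContinuousAt g0 u₀ := by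
      rw [hg0]
      apply ContinuousAt.neg
      apply ContinuousAt.mul continuousAt_const
      have hslit : charFn P X ((2:ℝ)^M)⁻¹ u₀ ∈ Complex.slitPlane := by
        apply Complex.mem_slitPlane_iff.2
        left
        have hb := hbd u₀ (by linarith) _ haMpos hM
        have h1 : |(charFn P X ((2:ℝ)^M)⁻¹ u₀ - 1).re| ≤ ‖charFn P X ((2:ℝ)^M)⁻¹ u₀ - 1‖ :=
          Complex.abs_re_le_norm _
        rw [Complex.sub_re, Complex.one_re] at h1
        rcases abs_le.1 (le_trans h1 hb) with ⟨h2, _⟩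
        linarith
      exact (continuousAt_clog hslit).comp
        ((LevyAuxPf.charFn_cont hX ((2:ℝ)^M)⁻¹).continuousAt)
    exact hg0cont.congr (Filter.eventuallyEq_of_mem (hS.mem_nhds hmem) heq).symm
  · have h0 : ∀ t : ℝ, 0 ≤ t → charFn P X t 0 = Complex.exp (-(t:ℂ) * 0) := by
      intro t ht
      rw [mul_zero, Complex.exp_zero]
      simp [charFn]
    exact huniq 0 (ψ 0) 0 (hψ 0) h0
end
end

section
/- Let M be a complex-valued process such that for every u in a countable dense set, t ↦ exp(i⟨u, X_t(ω)⟩)/φ_t(u) has left and right limits along a countable set S ⊂ ℝ⁺ for ω outside a null set. Then outside a null set, for every t, the map s ↦ X_s(ω) has at most one cluster point as s ↓ t along S and at most one as s ↑ t along S; i.e. X is làglàd along S almost surely. -/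
open MeasureTheory ProbabilityTheory Complex Filter Topology
open scoped RealInnerProductSpace

noncomputable section

private lemma cluster_eq_aux {n : ℕ} {φ : ℝ → EuclideanSpace ℝ (Fin n) → ℂ}
    (hφ0 : ∀ t u, φ t u ≠ 0)
    (hφc : Continuous fun p : ℝ × EuclideanSpace ℝ (Fin n) => φ p.1 p.2)
    {Y : ℝ → EuclideanSpace ℝ (Fin n)} {t : ℝ} {F : Filter ℝ} (hF : F ≤ 𝓝 t)
    (h : ∀ u : EuclideanSpace ℝ (Fin n), (∀ i, ∃ q : ℚ, u i = (q : ℝ)) →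
      ∃ L : ℂ, Tendsto (fun s => Complex.exp (Complex.I * (⟪u, Y s⟫ : ℝ)) / φ s u) F (𝓝 L))
    {a b : EuclideanSpace ℝ (Fin n)}
    (ha : MapClusterPt a F Y) (hb : MapClusterPt b F Y) : a = b := by
  have key : ∀ u : EuclideanSpace ℝ (Fin n), (∀ i, ∃ q : ℚ, u i = (q : ℝ)) →
      Complex.exp (Complex.I * (⟪u, a⟫ : ℝ)) = Complex.exp (Complex.I * (⟪u, b⟫ : ℝ)) := by
    intro u hu
    obtain ⟨L, hL⟩ := h u hu
    have hφt : Tendsto (fun s => φ s u) F (𝓝 (φ t u)) :=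
      ((hφc.comp (continuous_id.prodMk continuous_const)).tendsto t).comp (tendsto_id'.2 hF)
    have hexp : Tendsto (fun s => Complex.exp (Complex.I * (⟪u, Y s⟫ : ℝ))) F
        (𝓝 (L * φ t u)) := by
      have heq : (fun s => Complex.exp (Complex.I * (⟪u, Y s⟫ : ℝ)))
          = fun s => (Complex.exp (Complex.I * (⟪u, Y s⟫ : ℝ)) / φ s u) * φ s u := by
        funext s; rw [div_mul_cancel₀ _ (hφ0 s u)]
      rw [heq]; exact hL.mul hφt
    have hg : Continuous fun v : EuclideanSpace ℝ (Fin n) =>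
        Complex.exp (Complex.I * (⟪u, v⟫ : ℝ)) := by
      exact Complex.continuous_exp.comp (continuous_const.mul
        (Complex.continuous_ofReal.comp (continuous_const.inner continuous_id)))
    have uniq : ∀ c : ℂ, MapClusterPt c F (fun s => Complex.exp (Complex.I * (⟪u, Y s⟫ : ℝ)))
        → c = L * φ t u := by
      intro c hc
      have hne : (𝓝 c ⊓ map (fun s => Complex.exp (Complex.I * (⟪u, Y s⟫ : ℝ))) F).NeBot := hc
      exact eq_of_nhds_neBot (hne.mono (inf_le_inf_left _ hexp))
    have hga := MapClusterPt.continuousAt_comp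
      (f := fun v : EuclideanSpace ℝ (Fin n) => Complex.exp (Complex.I * (⟪u, v⟫ : ℝ)))
      hg.continuousAt ha
    have hgb := MapClusterPt.continuousAt_comp
      (f := fun v : EuclideanSpace ℝ (Fin n) => Complex.exp (Complex.I * (⟪u, v⟫ : ℝ)))
      hg.continuousAt hb
    exact (uniq _ hga).trans (uniq _ hgb).symm
  have hcoord : ∀ j : Fin n, a j = b j := by
    intro j
    have hd : ∀ q : ℚ, ∃ k : ℤ, (q : ℝ) * a j = (q : ℝ) * b j + k * (2 * Real.pi) := by
      intro q
      have hu : ∀ i, ∃ q' : ℚ, ((q : ℝ) • EuclideanSpace.single j (1:ℝ)) i = (q' : ℝ) := by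
        intro i
        by_cases hij : i = j
        · exact ⟨q, by simp [hij, EuclideanSpace.single_apply]⟩
        · exact ⟨0, by simp [EuclideanSpace.single_apply, hij]⟩
      have hk := key ((q : ℝ) • EuclideanSpace.single j (1:ℝ)) hu
      rw [real_inner_smul_left, real_inner_smul_left, EuclideanSpace.inner_single_left,
        EuclideanSpace.inner_single_left] at hk
      simp only [map_one, one_mul] at hk
      obtain ⟨k, hk2⟩ := Complex.exp_eq_exp_iff_exists_int.1 hk
      refine ⟨k, ?_⟩
      have him := congrArg Complex.im hk2
      simpa [mul_comm, mul_assoc, mul_left_comm] using him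
    obtain ⟨k, hk1⟩ := hd 1
    simp only [Rat.cast_one, one_mul] at hk1
    by_cases hk0 : k = 0
    · rw [hk0] at hk1; simpa using hk1
    · exfalso
      obtain ⟨m, hm⟩ := hd (1 / (2 * k))
      have hq : ((1 / (2 * (k:ℚ)) : ℚ) : ℝ) = 1 / (2 * (k : ℝ)) := by push_cast; ring
      rw [hq] at hm
      have hkr : (k : ℝ) ≠ 0 := Int.cast_ne_zero.2 hk0
      have hpi : Real.pi = m * (2 * Real.pi) := by
        rw [hk1, mul_add] at hm
        have e1 : (1 / (2 * (k:ℝ))) * ((k:ℝ) * (2 * Real.pi)) = Real.pi := by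
          field_simp
        linarith
      have h2m : (1 : ℝ) = 2 * m := by
        have hp : (1:ℝ) * Real.pi = (2 * (m:ℝ)) * Real.pi := by linear_combination hpi
        exact mul_right_cancel₀ Real.pi_ne_zero hp
      have : (1 : ℤ) = 2 * m := by exact_mod_cast h2m
      omega
  exact PiLp.ext hcoord

/-- if for every rational-coordinate `u` the exponential martingale
`exp(i⟨u,X_s⟩)/φ_s(u)` has one-sided limits along a countable set `S` off a null set,
then off a null set the path `s ↦ X_s(ω)` has at most one right cluster point and at
most one left cluster point along `S` at every time `t`, i.e. `X` is làglàd along `S` a.s. -/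
theorem laglad_along_countable_set {Ω : Type*} [MeasurableSpace Ω] (P : Measure Ω) {n : ℕ}
    (X : ℝ → Ω → EuclideanSpace ℝ (Fin n)) (hX : IsLevyProcess P X)
    (φ : ℝ → EuclideanSpace ℝ (Fin n) → ℂ)
    (hφ : ∀ t u, φ t u = charFn P X t u)
    (hφ0 : ∀ t u, φ t u ≠ 0)
    (hφc : Continuous fun p : ℝ × EuclideanSpace ℝ (Fin n) => φ p.1 p.2)
    (S : Set ℝ) (hS : S.Countable) (hSpos : S ⊆ Set.Ici 0)
    (hM : ∀ u : EuclideanSpace ℝ (Fin n), (∀ i, ∃ q : ℚ, u i = (q : ℝ)) →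
      ∃ N : Set Ω, P N = 0 ∧ ∀ ω ∉ N, ∀ t : ℝ, 0 ≤ t →
        (∃ L : ℂ, Tendsto (fun s => Complex.exp (Complex.I * (⟪u, X s ω⟫ : ℝ)) / φ s u)
            (𝓝[S ∩ Set.Ioi t] t) (𝓝 L)) ∧
        (∃ L : ℂ, Tendsto (fun s => Complex.exp (Complex.I * (⟪u, X s ω⟫ : ℝ)) / φ s u)
            (𝓝[S ∩ Set.Iio t] t) (𝓝 L))) :
    ∃ N : Set Ω, P N = 0 ∧ ∀ ω ∉ N, ∀ t : ℝ, 0 ≤ t →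
      (∀ a b : EuclideanSpace ℝ (Fin n),
        MapClusterPt a (𝓝[S ∩ Set.Ioi t] t) (fun s => X s ω) →
        MapClusterPt b (𝓝[S ∩ Set.Ioi t] t) (fun s => X s ω) → a = b) ∧
      (∀ a b : EuclideanSpace ℝ (Fin n),
        MapClusterPt a (𝓝[S ∩ Set.Iio t] t) (fun s => X s ω) →
        MapClusterPt b (𝓝[S ∩ Set.Iio t] t) (fun s => X s ω) → a = b) := by
  classical
  set T : Set (EuclideanSpace ℝ (Fin n)) := {u | ∀ i, ∃ q : ℚ, u i = (q : ℝ)} with hT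
  have hTc : T.Countable := by
    have hsub : T ⊆ Set.range (fun q : Fin n → ℚ =>
        (WithLp.toLp 2 (fun i => (q i : ℝ)) : EuclideanSpace ℝ (Fin n))) := by
      intro u hu
      choose q hq using hu
      exact ⟨q, PiLp.ext fun i => (hq i).symm⟩
    exact (Set.countable_range _).mono hsub
  haveI := hTc.to_subtype
  choose N hN0 hN using fun u : T => hM u u.2
  refine ⟨⋃ u : T, N u, measure_iUnion_null fun u => hN0 u, ?_⟩
  intro ω hω t ht
  have hω' : ∀ u : T, ω ∉ N u := fun u hu => hω (Set.mem_iUnion.2 ⟨u, hu⟩)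
  constructor
  · intro a b ha hb
    exact cluster_eq_aux hφ0 hφc (t := t) nhdsWithin_le_nhds
      (fun u hu => (hN ⟨u, hu⟩ ω (hω' _) t ht).1) ha hb
  · intro a b ha hb
    exact cluster_eq_aux hφ0 hφc (t := t) nhdsWithin_le_nhds
      (fun u hu => (hN ⟨u, hu⟩ ω (hω' _) t ht).2) ha hb
end
end
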